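/- arXiv:1407.7717 — 3 statements merged into one kernel-verified Lean document; each statement's English description precedes it below -/
import Mathlib

section
/- The primal value function grows sublinearly: lim_{x→∞} u(x)/x = 0. -/
/-!
Framework for "Convex duality for stochastic singular control problems"
by Bank and Kauppila.

* Time is indexed by `ℝ≥0`, i.e. `[0,∞)`; the value of a control at `t = ∞` is its
  supremum over `ℝ≥0` (controls are nondecreasing and left-continuous, so this is
  the left-continuous extension to `[0,∞]`), and the value `D_∞ = 0` of a dual
  variable at `∞` is a convention that does not enter any of the quantities below.
* `Setup` bundles the filtered probability space (with the usual conditions),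
  the stochastic clock `A` together with its associated random measure (a kernel)
  `μ`, and the utility random field `U` with marginal utility `U'` satisfying
  Assumption 1 of the paper.
* The pairing `𝔼⟨C,D⟩ = 𝔼 ∫_{[0,∞)} D_t dC_t` is expressed by the layer-cake
  formula: for a left-continuous nondecreasing `C` with `C_0 = 0`, and a
  right-continuous nonincreasing `D`, one has
  `∫_{[0,∞)} D_t dC_t = ∫_0^∞ (dC-measure of {t : D_t > y}) dy`, and the
  `dC`-measure of the set `{t : D_t > y}` (an interval of the form `[0,s)`,
  possibly `[0,∞)`) equals `sup {C_t : D_t > y}`.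
-/

open MeasureTheory Filter Set
open scoped ENNReal NNReal Topology

noncomputable section

/-- The underlying framework (filtered probability space satisfying the usual
conditions, stochastic clock and random measure, utility random field). -/
structure Setup (Ω : Type*) [m : MeasurableSpace Ω] where
  /-- the probability measure -/
  P : MeasureTheory.Measure Ω
  prob : MeasureTheory.IsProbabilityMeasure P
  /-- the filtration -/
  F : MeasureTheory.Filtration ℝ≥0 m
  /-- usual conditions: right-continuity of the filtration -/
  F_rightContinuous : ∀ t : ℝ≥0, F t = ⨅ (s : ℝ≥0) (_ : t < s), F s
  /-- usual conditions: `F 0` (hence every `F t`) contains all `P`-null sets -/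
  F_complete : ∀ s : Set Ω, P s = 0 → MeasurableSet[F 0] s
  /-- the stochastic clock -/
  A : Ω → ℝ≥0 → ℝ
  A_zero : ∀ ω, A ω 0 = 0
  A_cont : ∀ ω, Continuous (A ω)
  A_strictMono : ∀ ω, StrictMono (A ω)
  A_adapted : MeasureTheory.Adapted F fun t ω => A ω t
  /-- the associated random measure `μ(ω, dt) = dA(ω, t)` as a kernel -/
  μ : ProbabilityTheory.Kernel Ω ℝ≥0
  μ_sfinite : ProbabilityTheory.IsSFiniteKernel μ
  μ_Iic : ∀ ω (t : ℝ≥0), μ ω (Set.Iic t) = ENNReal.ofReal (A ω t)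
  /-- finite expected total mass -/
  μ_mass : (∫⁻ ω, μ ω Set.univ ∂P) ≠ ∞
  /-- the utility random field `U_t(ω, c)` -/
  U : Ω → ℝ≥0 → ℝ → ℝ
  /-- its marginal utility (derivative in `c` on `(0,∞)`) -/
  U' : Ω → ℝ≥0 → ℝ → ℝ
  U_zero : ∀ ω t, U ω t 0 = 0
  U_nonneg : ∀ ω t c, 0 ≤ c → 0 ≤ U ω t c
  U_strictConcave : ∀ ω t, StrictConcaveOn ℝ (Set.Ici 0) (U ω t)
  U_strictMono : ∀ ω t, StrictMonoOn (U ω t) (Set.Ici 0)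
  U_deriv : ∀ ω t c, 0 < c → HasDerivAt (U ω t) (U' ω t c) c
  U'_cont : ∀ ω t, ContinuousOn (U' ω t) (Set.Ioi 0)
  U'_pos : ∀ ω t c, 0 < c → 0 < U' ω t c
  /-- Inada condition at `0` -/
  U'_inada_zero : ∀ ω t, Filter.Tendsto (U' ω t) (nhdsWithin 0 (Set.Ioi 0)) Filter.atTop
  /-- Inada condition at `∞` -/
  U'_inada_infty : ∀ ω t, Filter.Tendsto (U' ω t) Filter.atTop (nhds 0)
  /-- progressive measurability of the random field -/
  U_prog : ∀ c : ℝ, MeasureTheory.ProgMeasurable F fun t ω => U ω t c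
  U_int : ∀ c : ℝ, 0 ≤ c → (∫⁻ ω, ∫⁻ t, ENNReal.ofReal (U ω t c) ∂(μ ω) ∂P) ≠ ∞
  /-- asymptotic elasticity uniformly less than one -/
  elasticity : ∃ γ : ℝ, 0 < γ ∧ γ < 1 ∧ ∃ Cγ : Ω → ℝ≥0 → ℝ,
    (MeasureTheory.ProgMeasurable F fun t ω => Cγ ω t) ∧ (∀ ω t, 0 ≤ Cγ ω t) ∧
    ((∫⁻ ω, ∫⁻ t, ENNReal.ofReal (U ω t (Cγ ω t)) ∂(μ ω) ∂P) ≠ ∞) ∧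
    ∀ ω t c, Cγ ω t < c → c * U' ω t c < γ * U ω t c

variable {Ω : Type*} [MeasurableSpace Ω]

/-- The class `𝓒` of controls: nonnegative (possibly infinite) adapted processes with
nondecreasing left-continuous paths starting at `0`. -/
def IsControl (S : Setup Ω) (C : Ω → ℝ≥0 → ℝ≥0∞) : Prop :=
  (∀ ω, Monotone (C ω)) ∧ (∀ ω, C ω 0 = 0) ∧
  (∀ ω (t : ℝ≥0), Filter.Tendsto (C ω) (nhdsWithin t (Set.Iio t)) (nhds (C ω t))) ∧
  MeasureTheory.Adapted S.F fun t ω => C ω t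

/-- The class `𝓓` of dual variables: nonnegative (possibly infinite) measurable processes
with nonincreasing right-continuous paths (the value at `t = ∞` is `0` by convention). -/
def IsDual (_S : Setup Ω) (D : Ω → ℝ≥0 → ℝ≥0∞) : Prop :=
  (∀ ω, Antitone (D ω)) ∧
  (∀ ω (t : ℝ≥0), Filter.Tendsto (D ω) (nhdsWithin t (Set.Ioi t)) (nhds (D ω t))) ∧
  Measurable (Function.uncurry D)

/-- The pairing `𝔼⟨C,D⟩ = 𝔼 ∫_{[0,∞)} D_t dC_t`, expressed via the layer-cake formula
(see the module docstring). -/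
def pairing (S : Setup Ω) (C D : Ω → ℝ≥0 → ℝ≥0∞) : ℝ≥0∞ :=
  ∫⁻ ω, (∫⁻ y in Set.Ioi (0 : ℝ),
    ⨆ (t : ℝ≥0) (_ : ENNReal.ofReal y < D ω t), C ω t) ∂S.P

/-- The utility field extended to consumption values in `[0,∞]` (monotone extension,
`U_t(∞) = lim_{c→∞} U_t(c)`). -/
def Uext (S : Setup Ω) (ω : Ω) (t : ℝ≥0) (c : ℝ≥0∞) : ℝ≥0∞ :=
  ⨆ (q : ℝ≥0) (_ : (q : ℝ≥0∞) ≤ c), ENNReal.ofReal (S.U ω t q)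

/-- The utility functional `𝕌(C) = 𝔼 ∫_0^∞ U_t(C_t) dμ_t`. -/
def Uval (S : Setup Ω) (C : Ω → ℝ≥0 → ℝ≥0∞) : ℝ≥0∞ :=
  ∫⁻ ω, ∫⁻ t, Uext S ω t (C ω t) ∂(S.μ ω) ∂S.P

/-- The conjugate field `V_t(ω,d) = sup_{c ≥ 0} (U_t(ω,c) - c d)`, for `d ∈ [0,∞]`
(nonnegative since `U_t(ω,0) = 0`; `V_t(0) = U_t(∞)`, `V_t(∞) = 0`). -/
def Vval (S : Setup Ω) (ω : Ω) (t : ℝ≥0) (d : ℝ≥0∞) : ℝ≥0∞ :=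
  ⨆ c : ℝ≥0, (ENNReal.ofReal (S.U ω t c) - (c : ℝ≥0∞) * d)

/-- `δ ∈ 𝓓̇(D)`: `δ` is a nonnegative progressively measurable process such that the
optional projection of `∫_·^∞ δ dμ` is dominated by that of `D`, i.e. for every `t`
and every bounded nonnegative `𝓕_t`-measurable `Z`,
`𝔼[Z ∫_t^∞ δ dμ] ≤ 𝔼[Z D_t]`. -/
def InDotD (S : Setup Ω) (D δ : Ω → ℝ≥0 → ℝ≥0∞) : Prop :=
  (MeasureTheory.ProgMeasurable S.F fun t ω => δ ω t) ∧
  ∀ (t : ℝ≥0) (Z : Ω → ℝ≥0∞), Measurable[S.F t] Z → (∃ b : ℝ≥0, ∀ ω, Z ω ≤ b) →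
    (∫⁻ ω, Z ω * ∫⁻ s in Set.Ioi t, δ ω s ∂(S.μ ω) ∂S.P) ≤ ∫⁻ ω, Z ω * D ω t ∂S.P

/-- The dual integral functional `δ ↦ 𝔼 ∫_0^∞ V_t(δ_t) dμ_t`. -/
def Vint (S : Setup Ω) (δ : Ω → ℝ≥0 → ℝ≥0∞) : ℝ≥0∞ :=
  ∫⁻ ω, ∫⁻ t, Vval S ω t (δ ω t) ∂(S.μ ω) ∂S.P

/-- The dual functional `𝕍(D) = inf_{δ ∈ 𝓓̇(D)} 𝔼 ∫_0^∞ V_t(δ_t) dμ_t`. -/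
def Vfun (S : Setup Ω) (D : Ω → ℝ≥0 → ℝ≥0∞) : ℝ≥0∞ :=
  ⨅ (δ : Ω → ℝ≥0 → ℝ≥0∞) (_ : InDotD S D δ), Vint S δ

/-- The marginal utility extended to consumption values in `[0,∞]`:
`U'_t(0) = U'_t(0+) = ∞` and `U'_t(∞) = lim_{c→∞} U'_t(c) = 0`. -/
def U'ext (S : Setup Ω) (ω : Ω) (t : ℝ≥0) (c : ℝ≥0∞) : ℝ≥0∞ :=
  ⨅ (q : ℝ≥0) (_ : 0 < q) (_ : (q : ℝ≥0∞) < c), ENNReal.ofReal (S.U' ω t q)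

/-- `-V'_t(ω,d)`, the negative of the derivative of the conjugate field, i.e. the
inverse of the marginal utility: `-V'(d) = sup {c : U'(c) > d}` (`= ∞` for `d = 0`,
`= 0` for `d = ∞`). -/
def negV' (S : Setup Ω) (ω : Ω) (t : ℝ≥0) (d : ℝ≥0∞) : ℝ≥0∞ :=
  ⨆ (c : ℝ≥0) (_ : 0 < c) (_ : d < ENNReal.ofReal (S.U' ω t c)), (c : ℝ≥0∞)

/-- The abstract budget framework of Section 3.2: polar sets `𝓒(1)` and `𝓓(1)`. -/
structure BudgetSetup (Ω : Type*) [m : MeasurableSpace Ω] extends Setup Ω where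
  /-- the budget set `𝓒(1)` -/
  C1 : Set (Ω → ℝ≥0 → ℝ≥0∞)
  /-- the set of state-price deflators `𝓓(1)` -/
  D1 : Set (Ω → ℝ≥0 → ℝ≥0∞)
  C1_ctrl : ∀ C ∈ C1, IsControl toSetup C
  D1_dual : ∀ D ∈ D1, IsDual toSetup D
  /-- `C ∈ 𝓒(1)` iff `𝔼⟨C,D⟩ ≤ 1` for all `D ∈ 𝓓(1)` -/
  C1_polar : ∀ C : Ω → ℝ≥0 → ℝ≥0∞, IsControl toSetup C →
    (C ∈ C1 ↔ ∀ D ∈ D1, pairing toSetup C D ≤ 1)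
  /-- `D ∈ 𝓓(1)` iff `𝔼⟨C,D⟩ ≤ 1` for all `C ∈ 𝓒(1)` -/
  D1_polar : ∀ D : Ω → ℝ≥0 → ℝ≥0∞, IsDual toSetup D →
    (D ∈ D1 ↔ ∀ C ∈ C1, pairing toSetup C D ≤ 1)
  /-- the control `𝟏` (with `𝟏_0 = 0`, `𝟏_t = 1` for `t > 0`) lies in `𝓒(1)` -/
  one_mem : (fun (_ : Ω) (t : ℝ≥0) => if t = 0 then (0 : ℝ≥0∞) else 1) ∈ C1
  /-- `𝓓(1) ≠ {0}` -/
  D1_nontrivial : ∃ D ∈ D1, D ≠ fun (_ : Ω) (_ : ℝ≥0) => (0 : ℝ≥0∞)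

variable {Ω : Type*} [MeasurableSpace Ω]

/-- The budget set `𝓒(x) = x · 𝓒(1)`. -/
def Cset (B : BudgetSetup Ω) (x : ℝ) : Set (Ω → ℝ≥0 → ℝ≥0∞) :=
  {C | ∃ C₀ ∈ B.C1, C = fun ω t => ENNReal.ofReal x * C₀ ω t}

/-- The set of dual variables `𝓓(y) = y · 𝓓(1)`. -/
def Dset (B : BudgetSetup Ω) (y : ℝ) : Set (Ω → ℝ≥0 → ℝ≥0∞) :=
  {D | ∃ D₀ ∈ B.D1, D = fun ω t => ENNReal.ofReal y * D₀ ω t}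

/-- The primal value function `u(x) = sup_{C ∈ 𝓒(x)} 𝕌(C)` (with values in `[0,∞]`). -/
def uE (B : BudgetSetup Ω) (x : ℝ) : ℝ≥0∞ :=
  ⨆ C ∈ Cset B x, Uval B.toSetup C

/-- The dual value function `v(y) = inf_{D ∈ 𝓓(y)} 𝕍(D)` (with values in `[0,∞]`). -/
def vE (B : BudgetSetup Ω) (y : ℝ) : ℝ≥0∞ :=
  ⨅ D ∈ Dset B y, Vfun B.toSetup D

/-- The primal value function, as a real-valued function. -/
def uu (B : BudgetSetup Ω) (x : ℝ) : ℝ := (uE B x).toReal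

/-- The dual value function, as a real-valued function. -/
def vv (B : BudgetSetup Ω) (y : ℝ) : ℝ := (vE B y).toReal

/-- `𝓓̇(y) = ∪_{D ∈ 𝓓(y)} 𝓓̇(D)`. -/
def InDotDy (B : BudgetSetup Ω) (y : ℝ) (δ : Ω → ℝ≥0 → ℝ≥0∞) : Prop :=
  ∃ D ∈ Dset B y, InDotD B.toSetup D δ


lemma scale_aux {U U' : ℝ → ℝ} {γ : ℝ} (hγ0 : 0 < γ)
    (hU0 : U 0 = 0) (hmono : StrictMonoOn U (Set.Ici 0))
    (hderiv : ∀ c, 0 < c → HasDerivAt U (U' c) c)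
    {Cg : ℝ} (helas : ∀ c, Cg < c → c * U' c < γ * U c)
    {a c : ℝ} (ha : 1 ≤ a) (hc : 0 < c) (hCg : Cg ≤ c) :
    U (a * c) ≤ a ^ γ * U c := by
  have ha0 : (0:ℝ) < a := lt_of_lt_of_le one_pos ha
  have hUpos : ∀ x, 0 < x → 0 < U x := fun x hx => by
    have := hmono (Set.mem_Ici.mpr le_rfl) hx.le hx
    simpa [hU0] using this
  set g : ℝ → ℝ := fun x => Real.log (U (x * c)) - γ * Real.log x with hgdef
  have hg' : ∀ x : ℝ, 0 < x →
      HasDerivAt g (U' (x * c) * c / U (x * c) - γ * x⁻¹) x := by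
    intro x hx
    have h1 : HasDerivAt (fun y : ℝ => y * c) c x := by
      simpa using (hasDerivAt_id x).mul_const c
    have h2 : HasDerivAt U (U' (x * c)) (x * c) := hderiv _ (by positivity)
    have h3 : HasDerivAt (fun y : ℝ => U (y * c)) (U' (x * c) * c) x := h2.comp x h1
    have h4 := h3.log (ne_of_gt (hUpos _ (by positivity)))
    have h5 : HasDerivAt (fun y : ℝ => γ * Real.log y) (γ * x⁻¹) x :=
      (Real.hasDerivAt_log (ne_of_gt hx)).const_mul γ
    exact h4.sub h5
  have hanti : AntitoneOn g (Set.Ici 1) := by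
    apply antitoneOn_of_deriv_nonpos (convex_Ici 1)
    · intro x hx
      exact (hg' x (lt_of_lt_of_le one_pos hx)).continuousAt.continuousWithinAt
    · intro x hx
      rw [interior_Ici] at hx
      exact ((hg' x (lt_trans one_pos hx)).differentiableAt).differentiableWithinAt
    · intro x hx
      rw [interior_Ici] at hx
      have hx0 : (0:ℝ) < x := lt_trans one_pos hx
      rw [(hg' x hx0).deriv]
      have hx1 : (1:ℝ) < x := hx
      have hxc : Cg < x * c := lt_of_le_of_lt hCg (by nlinarith)
      have he := helas (x * c) hxc
      have hu : 0 < U (x * c) := hUpos _ (by positivity)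
      rw [sub_nonpos, div_le_iff₀ hu]
      have h2 : c * U' (x * c) < γ * (x⁻¹ * U (x * c)) := by
        have h3 := mul_lt_mul_of_pos_left he (inv_pos.mpr hx0)
        calc c * U' (x * c) = x⁻¹ * (x * c * U' (x * c)) := by
              rw [← mul_assoc, ← mul_assoc, inv_mul_cancel₀ (ne_of_gt hx0), one_mul]
          _ < x⁻¹ * (γ * U (x * c)) := h3
          _ = γ * (x⁻¹ * U (x * c)) := by ring
      nlinarith [h2]
  have hga : g a ≤ g 1 := hanti (Set.mem_Ici.mpr le_rfl) ha ha
  have hUc : 0 < U c := hUpos c hc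
  have h1 : g 1 = Real.log (U c) := by simp [hgdef]
  have h2 : Real.log (U (a * c)) ≤ Real.log (a ^ γ * U c) := by
    rw [Real.log_mul (by positivity) (ne_of_gt hUc), Real.log_rpow ha0]
    have := hga
    rw [h1] at this
    simp only [hgdef] at this
    linarith
  have hac : 0 < U (a * c) := hUpos _ (by positivity)
  exact (Real.log_le_log_iff hac (by positivity)).mp h2


lemma BKmeas_of_prog {Ω : Type*} {m : MeasurableSpace Ω} {F : MeasureTheory.Filtration ℝ≥0 m}
    {f : ℝ≥0 → Ω → ℝ} (hf : ProgMeasurable F f) :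
    Measurable fun p : ℝ≥0 × Ω => f p.1 p.2 := by
  have hg : ∀ n : ℕ, Measurable fun p : ℝ≥0 × Ω => f (min p.1 (n : ℝ≥0)) p.2 := by
    intro n
    have h1 : Measurable[Subtype.instMeasurableSpace.prod (F (n : ℝ≥0))]
        fun p : Set.Iic (n : ℝ≥0) × Ω => f p.1 p.2 := (hf (n : ℝ≥0)).measurable
    have hsnd : @Measurable (ℝ≥0 × Ω) Ω _ (F (n : ℝ≥0)) Prod.snd :=
      fun s hs => measurable_snd (F.le _ s hs)
    have hfst : @Measurable (ℝ≥0 × Ω) (Set.Iic (n : ℝ≥0)) _ Subtype.instMeasurableSpace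
        (fun p => (⟨min p.1 (n : ℝ≥0), Set.mem_Iic.mpr (min_le_right _ _)⟩ : Set.Iic (n : ℝ≥0))) :=
      Measurable.subtype_mk (measurable_fst.min measurable_const)
    have hemb : @Measurable (ℝ≥0 × Ω) (Set.Iic (n : ℝ≥0) × Ω) _
        (Subtype.instMeasurableSpace.prod (F (n : ℝ≥0)))
        (fun p => ((⟨min p.1 (n : ℝ≥0), Set.mem_Iic.mpr (min_le_right _ _)⟩ : Set.Iic (n : ℝ≥0)), p.2)) :=
      Measurable.prodMk hfst hsnd
    exact h1.comp hemb
  have htend : ∀ p : ℝ≥0 × Ω,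
      Tendsto (fun n : ℕ => f (min p.1 (n : ℝ≥0)) p.2) atTop (𝓝 (f p.1 p.2)) := by
    intro p
    apply tendsto_atTop_of_eventually_const (i₀ := ⌈(p.1 : ℝ≥0)⌉₊)
    intro i hi
    rw [min_eq_left]
    exact_mod_cast Nat.ceil_le.mp hi
  exact measurable_of_tendsto_metrizable' atTop hg (tendsto_pi_nhds.mpr htend)


/-- The auxiliary measurable majorant process `Kf'`. -/
def BKkf {Ω : Type*} [MeasurableSpace Ω] (S : Setup Ω) (Cγ : Ω → ℝ≥0 → ℝ)
    (ω : Ω) (t : ℝ≥0) : ℝ≥0∞ :=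
  ⨆ (q : ℚ) (_ : 0 < (q : ℝ) ∧ (q : ℝ) < Cγ ω t), ENNReal.ofReal (S.U ω t q)

lemma BKkf_le {Ω : Type*} [MeasurableSpace Ω] (S : Setup Ω) {Cγ : Ω → ℝ≥0 → ℝ}
    (ω : Ω) (t : ℝ≥0) :
    BKkf S Cγ ω t ≤ ENNReal.ofReal (S.U ω t (Cγ ω t)) := by
  apply iSup₂_le
  intro q ⟨hq0, hqC⟩
  apply ENNReal.ofReal_le_ofReal
  exact (S.U_strictMono ω t).monotoneOn (Set.mem_Ici.mpr hq0.le)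
    (Set.mem_Ici.mpr (hq0.trans hqC).le) hqC.le

lemma BKkf_ge {Ω : Type*} [MeasurableSpace Ω] (S : Setup Ω) {Cγ : Ω → ℝ≥0 → ℝ}
    {ω : Ω} {t : ℝ≥0} (h : 0 < Cγ ω t) :
    ENNReal.ofReal (S.U ω t (Cγ ω t)) ≤ BKkf S Cγ ω t := by
  set b := Cγ ω t with hb
  have hqex : ∀ n : ℕ, ∃ q : ℚ, b - 1 / (n + 1) < (q : ℝ) ∧ (q : ℝ) < b := by
    intro n
    exact exists_rat_btwn (by
      have : (0 : ℝ) < 1 / (n + 1) := by positivity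
      linarith)
  choose q hq1 hq2 using hqex
  have hrec : Tendsto (fun n : ℕ => 1 / ((n : ℝ) + 1)) atTop (𝓝 0) :=
    tendsto_one_div_add_atTop_nhds_zero_nat
  have hqt : Tendsto (fun n : ℕ => (q n : ℝ)) atTop (𝓝 b) := by
    apply tendsto_of_tendsto_of_tendsto_of_le_of_le
      (g := fun n : ℕ => b - 1 / ((n : ℝ) + 1)) (h := fun _ : ℕ => b)
    · simpa using tendsto_const_nhds.sub hrec
    · exact tendsto_const_nhds
    · exact fun n => (hq1 n).le
    · exact fun n => (hq2 n).le
  have hcont : ContinuousAt (S.U ω t) b := (S.U_deriv ω t b h).continuousAt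
  have h3 : Tendsto (fun n : ℕ => ENNReal.ofReal (S.U ω t (q n))) atTop
      (𝓝 (ENNReal.ofReal (S.U ω t b))) :=
    (ENNReal.continuous_ofReal.continuousAt.tendsto.comp (hcont.tendsto.comp hqt))
  apply le_of_tendsto h3
  have hev : ∀ᶠ n : ℕ in atTop, 1 / ((n : ℝ) + 1) < b := hrec.eventually_lt_const h
  filter_upwards [hev] with n hn
  have hq0 : 0 < (q n : ℝ) := by have := hq1 n; linarith
  exact le_iSup₂_of_le (q n) ⟨hq0, hq2 n⟩ le_rfl

lemma BKkf_meas {Ω : Type*} [MeasurableSpace Ω] (S : Setup Ω) {Cγ : Ω → ℝ≥0 → ℝ}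
    (hprog : ProgMeasurable S.F fun t ω => Cγ ω t) :
    Measurable (Function.uncurry (BKkf S Cγ)) := by
  have hCme : Measurable fun p : Ω × ℝ≥0 => Cγ p.1 p.2 :=
    (BKmeas_of_prog hprog).comp measurable_swap
  apply Measurable.iSup
  intro qq
  have hU : Measurable fun p : Ω × ℝ≥0 => ENNReal.ofReal (S.U p.1 p.2 (qq : ℝ)) :=
    ENNReal.measurable_ofReal.comp ((BKmeas_of_prog (S.U_prog (qq : ℝ))).comp measurable_swap)
  have heq : (fun p : Ω × ℝ≥0 =>
      ⨆ (_ : 0 < (qq : ℝ) ∧ (qq : ℝ) < Cγ p.1 p.2), ENNReal.ofReal (S.U p.1 p.2 qq)) =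
      Set.indicator {p : Ω × ℝ≥0 | 0 < (qq : ℝ) ∧ (qq : ℝ) < Cγ p.1 p.2}
        (fun p => ENNReal.ofReal (S.U p.1 p.2 qq)) := by
    ext p
    rw [Set.indicator_apply]
    split_ifs with hp
    · exact iSup_pos hp
    · exact (iSup_neg hp).trans bot_eq_zero
  have hms : MeasurableSet {p : Ω × ℝ≥0 | 0 < (qq : ℝ) ∧ (qq : ℝ) < Cγ p.1 p.2} := by
    by_cases hq0 : 0 < (qq : ℝ)
    · have : {p : Ω × ℝ≥0 | 0 < (qq : ℝ) ∧ (qq : ℝ) < Cγ p.1 p.2} =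
          {p : Ω × ℝ≥0 | (qq : ℝ) < Cγ p.1 p.2} := by
        ext p; simp [hq0]
      rw [this]
      exact measurableSet_lt measurable_const hCme
    · have : {p : Ω × ℝ≥0 | 0 < (qq : ℝ) ∧ (qq : ℝ) < Cγ p.1 p.2} = ∅ := by
        ext p; simp [hq0]
      rw [this]; exact MeasurableSet.empty
  show Measurable fun p : Ω × ℝ≥0 =>
    ⨆ (_ : 0 < (qq : ℝ) ∧ (qq : ℝ) < Cγ p.1 p.2), ENNReal.ofReal (S.U p.1 p.2 qq)
  rw [heq]
  exact hU.indicator hms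

lemma BKmain {Ω : Type*} [MeasurableSpace Ω] (S : Setup Ω) {γ : ℝ} (hγ0 : 0 < γ)
    {Cγ : Ω → ℝ≥0 → ℝ} (hCγ0 : ∀ ω t, 0 ≤ Cγ ω t)
    (helas : ∀ ω t c, Cγ ω t < c → c * S.U' ω t c < γ * S.U ω t c)
    (ω : Ω) (t : ℝ≥0) {a : ℝ} (ha : 1 ≤ a) (c : ℝ≥0∞) :
    Uext S ω t (ENNReal.ofReal a * c) ≤
      ENNReal.ofReal (a ^ γ) * (Uext S ω t c + BKkf S Cγ ω t) := by
  have ha0 : (0 : ℝ) < a := lt_of_lt_of_le one_pos ha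
  have haγ : 1 ≤ ENNReal.ofReal (a ^ γ) := by
    rw [ENNReal.one_le_ofReal]
    exact Real.one_le_rpow ha hγ0.le
  have hmono := (S.U_strictMono ω t).monotoneOn
  rw [Uext]
  apply iSup₂_le
  intro q hq
  rcases eq_or_ne c ∞ with hc | hc
  · have h1 : ENNReal.ofReal (S.U ω t q) ≤ Uext S ω t c := by
      rw [Uext]
      exact le_iSup₂_of_le q (by rw [hc]; exact le_top) le_rfl
    calc ENNReal.ofReal (S.U ω t q) ≤ Uext S ω t c + BKkf S Cγ ω t := h1.trans le_self_add
      _ = 1 * (Uext S ω t c + BKkf S Cγ ω t) := (one_mul _).symm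
      _ ≤ ENNReal.ofReal (a ^ γ) * (Uext S ω t c + BKkf S Cγ ω t) :=
          mul_le_mul_left haγ _
  · set r : ℝ≥0 := c.toNNReal with hrdef
    have hcr : c = (r : ℝ≥0∞) := (ENNReal.coe_toNNReal hc).symm
    have hqar : (q : ℝ) ≤ a * (r : ℝ) := by
      have h2 : (q : ℝ≥0∞) ≤ ENNReal.ofReal (a * (r : ℝ)) := by
        rw [ENNReal.ofReal_mul ha0.le, ENNReal.ofReal_coe_nnreal]
        rw [hcr] at hq
        exact hq
      rwa [← ENNReal.ofReal_coe_nnreal, ENNReal.ofReal_le_ofReal_iff (by positivity)] at h2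
    have hUrc : ENNReal.ofReal (S.U ω t r) ≤ Uext S ω t c := by
      rw [Uext]
      exact le_iSup₂_of_le r hcr.ge le_rfl
    rcases eq_or_lt_of_le (zero_le (a := r)) with hr0 | hr0
    · -- r = 0, hence q = 0
      have hq0 : (q : ℝ) = 0 := le_antisymm (by simpa [← hr0] using hqar) q.2
      rw [show ((q : ℝ) : ℝ) = (0:ℝ) from hq0]
      simp [S.U_zero ω t]
    · have hrpos : (0 : ℝ) < (r : ℝ) := hr0
      set c' : ℝ := max (r : ℝ) (Cγ ω t) with hc'
      have hc'pos : 0 < c' := lt_of_lt_of_le hrpos (le_max_left _ _)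
      have h1 : S.U ω t q ≤ S.U ω t (a * c') := by
        apply hmono (Set.mem_Ici.mpr q.2) (Set.mem_Ici.mpr (by positivity))
        calc (q : ℝ) ≤ a * (r : ℝ) := hqar
          _ ≤ a * c' := by
              apply mul_le_mul_of_nonneg_left (le_max_left _ _) ha0.le
      have h2 : S.U ω t (a * c') ≤ a ^ γ * S.U ω t c' :=
        scale_aux hγ0 (S.U_zero ω t) (S.U_strictMono ω t)
          (fun cc hcc => S.U_deriv ω t cc hcc) (helas ω t) ha hc'pos (le_max_right _ _)
      have h3 : ENNReal.ofReal (S.U ω t q) ≤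
          ENNReal.ofReal (a ^ γ) * ENNReal.ofReal (S.U ω t c') := by
        rw [← ENNReal.ofReal_mul (by positivity)]
        exact ENNReal.ofReal_le_ofReal (h1.trans h2)
      refine h3.trans (mul_le_mul_right ?_ _)
      rcases le_total (Cγ ω t) (r : ℝ) with hle | hle
      · rw [show c' = (r : ℝ) from max_eq_left hle]
        exact hUrc.trans le_self_add
      · have hCpos : 0 < Cγ ω t := lt_of_lt_of_le hrpos hle
        rw [show c' = Cγ ω t from max_eq_right hle]
        exact (BKkf_ge S hCpos).trans le_add_self

lemma BKint {Ω : Type*} [MeasurableSpace Ω] (S : Setup Ω) {γ : ℝ} (hγ0 : 0 < γ)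
    {Cγ : Ω → ℝ≥0 → ℝ} (hprog : ProgMeasurable S.F fun t ω => Cγ ω t)
    (hCγ0 : ∀ ω t, 0 ≤ Cγ ω t)
    (helas : ∀ ω t c, Cγ ω t < c → c * S.U' ω t c < γ * S.U ω t c)
    {a : ℝ} (ha : 1 ≤ a) (C : Ω → ℝ≥0 → ℝ≥0∞) :
    Uval S (fun ω t => ENNReal.ofReal a * C ω t) ≤
      ENNReal.ofReal (a ^ γ) *
        (Uval S C + ∫⁻ ω, ∫⁻ t, BKkf S Cγ ω t ∂(S.μ ω) ∂S.P) := by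
  haveI := S.μ_sfinite
  have hKmeas := BKkf_meas S hprog
  have h1 : ∀ ω, ∫⁻ t, Uext S ω t (ENNReal.ofReal a * C ω t) ∂(S.μ ω) ≤
      ENNReal.ofReal (a ^ γ) *
        ((∫⁻ t, Uext S ω t (C ω t) ∂(S.μ ω)) + ∫⁻ t, BKkf S Cγ ω t ∂(S.μ ω)) := by
    intro ω
    calc ∫⁻ t, Uext S ω t (ENNReal.ofReal a * C ω t) ∂(S.μ ω)
        ≤ ∫⁻ t, ENNReal.ofReal (a ^ γ) * (Uext S ω t (C ω t) + BKkf S Cγ ω t) ∂(S.μ ω) :=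
          lintegral_mono fun t => BKmain S hγ0 hCγ0 helas ω t ha (C ω t)
      _ = ENNReal.ofReal (a ^ γ) *
            ∫⁻ t, (Uext S ω t (C ω t) + BKkf S Cγ ω t) ∂(S.μ ω) :=
          lintegral_const_mul' _ _ ENNReal.ofReal_ne_top
      _ = ENNReal.ofReal (a ^ γ) *
            ((∫⁻ t, Uext S ω t (C ω t) ∂(S.μ ω)) + ∫⁻ t, BKkf S Cγ ω t ∂(S.μ ω)) := by
          have hKω : Measurable fun t => BKkf S Cγ ω t :=
            hKmeas.comp measurable_prodMk_left
          rw [lintegral_add_right _ hKω]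
  calc Uval S (fun ω t => ENNReal.ofReal a * C ω t)
      ≤ ∫⁻ ω, ENNReal.ofReal (a ^ γ) *
          ((∫⁻ t, Uext S ω t (C ω t) ∂(S.μ ω)) + ∫⁻ t, BKkf S Cγ ω t ∂(S.μ ω)) ∂S.P :=
        lintegral_mono h1
    _ = ENNReal.ofReal (a ^ γ) * ∫⁻ ω,
          ((∫⁻ t, Uext S ω t (C ω t) ∂(S.μ ω)) + ∫⁻ t, BKkf S Cγ ω t ∂(S.μ ω)) ∂S.P :=
        lintegral_const_mul' _ _ ENNReal.ofReal_ne_top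
    _ = ENNReal.ofReal (a ^ γ) *
          (Uval S C + ∫⁻ ω, ∫⁻ t, BKkf S Cγ ω t ∂(S.μ ω) ∂S.P) := by
        have hKint : Measurable fun ω => ∫⁻ t, BKkf S Cγ ω t ∂(S.μ ω) :=
          Measurable.lintegral_kernel_prod_right hKmeas
        rw [lintegral_add_right _ hKint]
        rfl

/-- the primal value function grows sublinearly,
`lim_{x→∞} u(x)/x = 0`. -/
theorem statement10 (B : BudgetSetup Ω) (hfin : ∃ x₀ : ℝ, 0 < x₀ ∧ uE B x₀ ≠ ∞) :
    Filter.Tendsto (fun x : ℝ => uu B x / x) Filter.atTop (nhds 0) := by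
  obtain ⟨x₀, hx₀, hfin₀⟩ := hfin
  obtain ⟨γ, hγ0, hγ1, Cγ, hprog, hCγ0, hKfin, helas⟩ := B.elasticity
  set K : ℝ≥0∞ := ∫⁻ ω, ∫⁻ t, BKkf B.toSetup Cγ ω t ∂(B.toSetup.μ ω) ∂B.toSetup.P with hK
  have hKne : K ≠ ∞ := by
    refine ne_top_of_le_ne_top hKfin ?_
    exact lintegral_mono fun ω => lintegral_mono fun t => BKkf_le B.toSetup ω t
  set M : ℝ≥0∞ := uE B x₀ + K with hM
  have hMne : M ≠ ∞ := ENNReal.add_ne_top.mpr ⟨hfin₀, hKne⟩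
  have key : ∀ x : ℝ, x₀ ≤ x → uE B x ≤ ENNReal.ofReal ((x / x₀) ^ γ) * M := by
    intro x hx
    set a : ℝ := x / x₀ with hadef
    have ha : 1 ≤ a := (one_le_div hx₀).mpr hx
    have hax : a * x₀ = x := div_mul_cancel₀ x (ne_of_gt hx₀)
    rw [uE]
    apply iSup₂_le
    intro C hC
    obtain ⟨C₀, hC₀, rfl⟩ := hC
    have hsplit : (fun (ω : Ω) (t : ℝ≥0) => ENNReal.ofReal x * C₀ ω t)
        = fun ω t => ENNReal.ofReal a * (ENNReal.ofReal x₀ * C₀ ω t) := by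
      funext ω t
      rw [← mul_assoc, ← ENNReal.ofReal_mul (by positivity), hax]
    rw [hsplit]
    have hb := BKint B.toSetup hγ0 hprog hCγ0 helas ha
      (fun ω t => ENNReal.ofReal x₀ * C₀ ω t)
    refine hb.trans ?_
    apply mul_le_mul_right
    apply add_le_add_left
    rw [uE]
    exact le_iSup₂_of_le _ ⟨C₀, hC₀, rfl⟩ le_rfl
  have keyR : ∀ x : ℝ, x₀ ≤ x → uu B x ≤ (x / x₀) ^ γ * M.toReal := by
    intro x hx
    have h2 : (ENNReal.ofReal ((x / x₀) ^ γ) * M) ≠ ∞ :=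
      ENNReal.mul_ne_top ENNReal.ofReal_ne_top hMne
    have h3 := ENNReal.toReal_mono h2 (key x hx)
    rwa [ENNReal.toReal_mul,
      ENNReal.toReal_ofReal (Real.rpow_nonneg (div_nonneg (by linarith) hx₀.le) γ)] at h3
  have hup : Tendsto (fun x : ℝ => (x / x₀) ^ γ * M.toReal / x) atTop (𝓝 0) := by
    have hEq : (fun x : ℝ => (x / x₀) ^ γ * M.toReal / x)
        =ᶠ[atTop] fun x : ℝ => (M.toReal / x₀ ^ γ) * x ^ (γ - 1) := by
      filter_upwards [eventually_gt_atTop 0] with x hx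
      rw [Real.div_rpow hx.le hx₀.le, Real.rpow_sub hx, Real.rpow_one]
      have hxγ : (0:ℝ) < x₀ ^ γ := Real.rpow_pos_of_pos hx₀ γ
      field_simp
    have h0 : Tendsto (fun x : ℝ => (M.toReal / x₀ ^ γ) * x ^ (γ - 1)) atTop (𝓝 0) := by
      have h1 := (tendsto_rpow_neg_atTop (y := 1 - γ) (by linarith)).const_mul
        (M.toReal / x₀ ^ γ)
      simpa [neg_sub] using h1
    exact Filter.Tendsto.congr' hEq.symm h0
  apply tendsto_of_tendsto_of_tendsto_of_le_of_le' tendsto_const_nhds hup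
  · filter_upwards [eventually_gt_atTop 0] with x hx
    exact div_nonneg ENNReal.toReal_nonneg hx.le
  · filter_upwards [eventually_ge_atTop x₀, eventually_gt_atTop 0] with x hx hx0
    have := keyR x hx
    gcongr
end
end

section
/- The pairing is separately lower-semicontinuous with respect to dist-convergence: if C, C¹, C², … ∈ 𝓒 with dist(Cⁿ, C) → 0, then for every D ∈ 𝓓, liminf_n 𝔼⟨Cⁿ, D⟩ ≥ 𝔼⟨C, D⟩; and symmetrically, if D, D¹, D², … ∈ 𝓓 with dist(Dⁿ, D) → 0, then for every C ∈ 𝓒, liminf_n 𝔼⟨C, Dⁿ⟩ ≥ 𝔼⟨C, D⟩. -/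
/-!
Framework for "Convex duality for stochastic singular control problems"
by Bank and Kauppila.

* Time is indexed by `ℝ≥0`, i.e. `[0,∞)`; the value of a control at `t = ∞` is its
  supremum over `ℝ≥0` (controls are nondecreasing and left-continuous, so this is
  the left-continuous extension to `[0,∞]`), and the value `D_∞ = 0` of a dual
  variable at `∞` is a convention that does not enter any of the quantities below.
* `Setup` bundles the filtered probability space (with the usual conditions),
  the stochastic clock `A` together with its associated random measure (a kernel)
  `μ`, and the utility random field `U` with marginal utility `U'` satisfying
  Assumption 1 of the paper.
* The pairing `𝔼⟨C,D⟩ = 𝔼 ∫_{[0,∞)} D_t dC_t` is expressed by the layer-cake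
  formula: for a left-continuous nondecreasing `C` with `C_0 = 0`, and a
  right-continuous nonincreasing `D`, one has
  `∫_{[0,∞)} D_t dC_t = ∫_0^∞ (dC-measure of {t : D_t > y}) dy`, and the
  `dC`-measure of the set `{t : D_t > y}` (an interval of the form `[0,s)`,
  possibly `[0,∞)`) equals `sup {C_t : D_t > y}`.
-/

open MeasureTheory Filter Set
open scoped ENNReal NNReal Topology

noncomputable section

namespace BK14

/-- rationals (clipped to `ℝ≥0`) are dense in `ℝ≥0` -/
lemma rat_dense {a b : ℝ≥0} (hab : a < b) :
    ∃ q : ℚ, a < Real.toNNReal q ∧ Real.toNNReal q < b := by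
  obtain ⟨q, hq1, hq2⟩ := exists_rat_btwn (show (a : ℝ) < (b : ℝ) from hab)
  exact ⟨q, Real.lt_toNNReal_iff_coe_lt.2 hq1,
    (Real.toNNReal_lt_iff_lt_coe (le_of_lt ((a.coe_nonneg).trans_lt hq1))).2 hq2⟩

/-- left limit of a monotone left-continuous function -/
lemma left_lim {C : ℝ≥0 → ℝ≥0∞} (hm : Monotone C) {t : ℝ≥0} (ht : 0 < t)
    (hlc : Tendsto C (𝓝[<] t) (𝓝 (C t))) : C t ≤ ⨆ r ∈ Iio t, C r := by
  by_contra hlt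
  push_neg at hlt
  haveI : (𝓝[<] t).NeBot := nhdsWithin_Iio_self_neBot' ⟨0, ht⟩
  have h1 : ∀ᶠ r in 𝓝[<] t, (⨆ r ∈ Iio t, C r) < C r := hlc (Ioi_mem_nhds hlt)
  obtain ⟨r, hr1, hr2⟩ := (h1.and self_mem_nhdsWithin).exists
  exact absurd (le_iSup₂ (f := fun (r : ℝ≥0) (_ : r ∈ Iio t) => C r) r hr2) (not_le.2 hr1)

/-- master lemma: bounding the sup of a monotone left-continuous function over a set -/
lemma master {C : ℝ≥0 → ℝ≥0∞} (hm : Monotone C) (h0 : C 0 = 0)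
    (hlc : ∀ t : ℝ≥0, Tendsto C (𝓝[<] t) (𝓝 (C t)))
    {P : ℝ≥0 → Prop} {M : ℝ≥0∞}
    (hP : ∀ t, P t → ∀ r < t, ∃ u, P u ∧ r ≤ u ∧ C u ≤ M) :
    (⨆ (t : ℝ≥0) (_ : P t), C t) ≤ M := by
  refine iSup_le fun t => iSup_le fun ht => ?_
  rcases eq_or_ne t 0 with rfl | htz
  · simp [h0]
  · have ht0 : 0 < t := pos_iff_ne_zero.2 htz
    refine (left_lim hm ht0 (hlc t)).trans (iSup₂_le fun r hr => ?_)
    obtain ⟨u, hu, hru, huM⟩ := hP t ht r hr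
    exact (hm hru).trans huM


/-- representation of a monotone left-continuous path as a countable sup -/
lemma control_rep {C : ℝ≥0 → ℝ≥0∞} (hm : Monotone C) (h0 : C 0 = 0)
    (hlc : ∀ t : ℝ≥0, Tendsto C (𝓝[<] t) (𝓝 (C t))) (t : ℝ≥0) :
    C t = ⨆ q : ℚ, if Real.toNNReal q < t then C (Real.toNNReal q) else 0 := by
  refine le_antisymm ?_ (iSup_le fun q => ?_)
  · have := master (P := fun u => u < t) (M := ⨆ q : ℚ,
      if Real.toNNReal q < t then C (Real.toNNReal q) else 0) hm h0 hlc ?_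
    · rcases eq_or_ne t 0 with rfl | htz
      · simp [h0]
      · refine le_trans ?_ this
        calc C t ≤ ⨆ r ∈ Iio t, C r := left_lim hm (pos_iff_ne_zero.2 htz) (hlc t)
        _ ≤ ⨆ (u : ℝ≥0) (_ : u < t), C u := le_rfl
    · intro u hu r hr
      obtain ⟨q, hq1, hq2⟩ := rat_dense (hr.trans hu)
      refine ⟨Real.toNNReal q, hq2, le_of_lt hq1, ?_⟩
      exact le_iSup_of_le q (by rw [if_pos hq2])
  · split_ifs with hq
    · exact hm (le_of_lt hq)
    · exact zero_le

/-- joint measurability of a control from slice measurability -/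
lemma control_uncurry_meas {Ω : Type*} [MeasurableSpace Ω] {C : Ω → ℝ≥0 → ℝ≥0∞}
    (hm : ∀ ω, Monotone (C ω)) (h0 : ∀ ω, C ω 0 = 0)
    (hlc : ∀ ω (t : ℝ≥0), Tendsto (C ω) (𝓝[<] t) (𝓝 (C ω t)))
    (hslice : ∀ t : ℝ≥0, Measurable fun ω => C ω t) :
    Measurable fun p : Ω × ℝ≥0 => C p.1 p.2 := by
  have : (fun p : Ω × ℝ≥0 => C p.1 p.2) = fun p : Ω × ℝ≥0 =>
      ⨆ q : ℚ, if Real.toNNReal q < p.2 then C p.1 (Real.toNNReal q) else 0 := by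
    funext p; exact control_rep (hm p.1) (h0 p.1) (hlc p.1) p.2
  rw [this]
  refine Measurable.iSup fun q => Measurable.ite ?_ ((hslice _).comp measurable_fst)
    measurable_const
  exact measurable_snd measurableSet_Ioi

/-- rational representation of the layer-cake sup -/
lemma G_rep {C D : ℝ≥0 → ℝ≥0∞} (hm : Monotone C) (h0 : C 0 = 0)
    (hlc : ∀ t : ℝ≥0, Tendsto C (𝓝[<] t) (𝓝 (C t))) (hD : Antitone D) (y : ℝ) :
    (⨆ (t : ℝ≥0) (_ : ENNReal.ofReal y < D t), C t)
      = ⨆ q : ℚ, if ENNReal.ofReal y < D (Real.toNNReal q) then C (Real.toNNReal q) else 0 := by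
  refine le_antisymm ?_ (iSup_le fun q => ?_)
  · refine master hm h0 hlc ?_
    intro t ht r hr
    obtain ⟨q, hq1, hq2⟩ := rat_dense hr
    refine ⟨Real.toNNReal q, lt_of_lt_of_le ht (hD (le_of_lt hq2)), le_of_lt hq1, ?_⟩
    refine le_iSup_of_le q ?_
    rw [if_pos (lt_of_lt_of_le ht (hD (le_of_lt hq2)))]
  · split_ifs with hq
    · exact le_iSup₂ (f := fun (t : ℝ≥0) (_ : ENNReal.ofReal y < D t) => C t) _ hq
    · exact zero_le

/-- joint measurability of the layer-cake sup -/
lemma G_meas {Ω : Type*} [MeasurableSpace Ω] {C D : Ω → ℝ≥0 → ℝ≥0∞}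
    (hm : ∀ ω, Monotone (C ω)) (h0 : ∀ ω, C ω 0 = 0)
    (hlc : ∀ ω (t : ℝ≥0), Tendsto (C ω) (𝓝[<] t) (𝓝 (C ω t)))
    (hslice : ∀ t : ℝ≥0, Measurable fun ω => C ω t)
    (hDanti : ∀ ω, Antitone (D ω))
    (hDslice : ∀ t : ℝ≥0, Measurable fun ω => D ω t) :
    Measurable fun p : Ω × ℝ =>
      ⨆ (t : ℝ≥0) (_ : ENNReal.ofReal p.2 < D p.1 t), C p.1 t := by
  have : (fun p : Ω × ℝ => ⨆ (t : ℝ≥0) (_ : ENNReal.ofReal p.2 < D p.1 t), C p.1 t)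
      = fun p : Ω × ℝ => ⨆ q : ℚ, if ENNReal.ofReal p.2 < D p.1 (Real.toNNReal q)
          then C p.1 (Real.toNNReal q) else 0 := by
    funext p; exact G_rep (hm p.1) (h0 p.1) (hlc p.1) (hDanti p.1) p.2
  rw [this]
  refine Measurable.iSup fun q => Measurable.ite ?_ ((hslice _).comp measurable_fst)
    measurable_const
  exact measurableSet_lt (ENNReal.measurable_ofReal.comp measurable_snd)
    ((hDslice _).comp measurable_fst)

end BK14


open BK14

variable {Ω : Type*} [MeasurableSpace Ω]

/-- The distance `dist(X,Y) = 𝔼 ∫_0^∞ |h(X_t) - h(Y_t)| dμ_t` on processes, for a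
fixed homeomorphism `h` of `[0,∞]` onto a subset of `[0,1]` (the restriction of a
homeomorphism `[-∞,∞] → [0,1]`). -/
def distE (S : Setup Ω) (h : ℝ≥0∞ → ℝ) (X Y : Ω → ℝ≥0 → ℝ≥0∞) : ℝ≥0∞ :=
  ∫⁻ ω, ∫⁻ t, ENNReal.ofReal |h (X ω t) - h (Y ω t)| ∂(S.μ ω) ∂S.P


namespace BK14

/-- a conull set w.r.t. the clock measure meets every open interval -/
lemma conull_dense {ν : Measure ℝ≥0} {A : ℝ≥0 → ℝ} (hA0 : A 0 = 0) (hAmono : StrictMono A)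
    (hν : ∀ t, ν (Iic t) = ENNReal.ofReal (A t)) {N : Set ℝ≥0} (hN : ν Nᶜ = 0)
    {a b : ℝ≥0} (hab : a < b) : (N ∩ Ioo a b).Nonempty := by
  obtain ⟨m, ham, hmb⟩ := exists_between hab
  by_contra hemp
  rw [Set.not_nonempty_iff_eq_empty] at hemp
  have hsub : Ioc a m ⊆ Nᶜ := by
    intro t ht
    intro htN
    have : t ∈ N ∩ Ioo a b := ⟨htN, ht.1, lt_of_le_of_lt ht.2 hmb⟩
    simp [hemp] at this
  have hz : ν (Ioc a m) = 0 := measure_mono_null hsub hN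
  have hle : ν (Iic m) ≤ ν (Iic a) + ν (Ioc a m) := by
    rw [← Set.Iic_union_Ioc_eq_Iic (le_of_lt ham)]
    exact measure_union_le _ _
  rw [hz, add_zero, hν, hν] at hle
  have hAa : 0 ≤ A a := hA0 ▸ hAmono.monotone (zero_le : (0:ℝ≥0) ≤ a)
  have := (ENNReal.ofReal_le_ofReal_iff hAa).1 hle
  exact absurd this (not_le.2 (hAmono ham))

end BK14

/-- extraction of an a.e.-convergent subsequence from `distE → 0` -/
lemma exists_subseq_ae_tendsto {Ω : Type*} [MeasurableSpace Ω] (S : Setup Ω) (h : ℝ≥0∞ → ℝ)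
    (hcont : Continuous h) (hinj : Function.Injective h)
    {Xn : ℕ → Ω → ℝ≥0 → ℝ≥0∞} {X : Ω → ℝ≥0 → ℝ≥0∞}
    (hXn : ∀ n, Measurable fun p : Ω × ℝ≥0 => Xn n p.1 p.2)
    (hX : Measurable fun p : Ω × ℝ≥0 => X p.1 p.2)
    (hdist : Tendsto (fun n => distE S h (Xn n) X) atTop (𝓝 0)) :
    ∃ ρ : ℕ → ℕ, StrictMono ρ ∧ ∀ᵐ ω ∂S.P, ∀ᵐ t ∂(S.μ ω),
      Tendsto (fun k => Xn (ρ k) ω t) atTop (𝓝 (X ω t)) := by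
  haveI := S.μ_sfinite
  set e : ℕ → Ω → ℝ≥0 → ℝ≥0∞ :=
    fun n ω t => ENNReal.ofReal |h (Xn n ω t) - h (X ω t)| with he
  have hjoint : ∀ n, Measurable fun p : Ω × ℝ≥0 => e n p.1 p.2 := fun n =>
    ENNReal.measurable_ofReal.comp
      (((hcont.measurable.comp (hXn n)).sub (hcont.measurable.comp hX)).abs)
  have hev : ∀ k : ℕ, ∀ᶠ n in atTop, distE S h (Xn n) X < 2⁻¹ ^ k := by
    intro k
    refine hdist (Iio_mem_nhds ?_)
    exact ENNReal.pow_pos (ENNReal.inv_pos.2 ENNReal.ofNat_ne_top) k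
  obtain ⟨ρ, hρmono, hρ⟩ := extraction_forall_of_eventually hev
  refine ⟨ρ, hρmono, ?_⟩
  have hKmeas : ∀ n, Measurable fun ω => ∫⁻ t, e n ω t ∂S.μ ω := fun n =>
    Measurable.lintegral_kernel_prod_right' (hjoint n)
  have hgeo : ∑' k : ℕ, (2⁻¹ : ℝ≥0∞) ^ k = 2 := by
    rw [ENNReal.tsum_geometric, ENNReal.one_sub_inv_two, inv_inv]
  have hsumtop : ∑' k, distE S h (Xn (ρ k)) X ≠ ∞ := by
    refine ne_top_of_le_ne_top (hgeo ▸ (ENNReal.ofNat_ne_top : (2:ℝ≥0∞) ≠ ∞)) ?_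
    exact ENNReal.tsum_le_tsum fun k => le_of_lt (hρ k)
  have hsum' : (∫⁻ ω, ∑' k, ∫⁻ t, e (ρ k) ω t ∂S.μ ω ∂S.P) ≠ ∞ := by
    rw [lintegral_tsum fun k => (hKmeas (ρ k)).aemeasurable]
    exact hsumtop
  have h1 : ∀ᵐ ω ∂S.P, (∑' k, ∫⁻ t, e (ρ k) ω t ∂S.μ ω) < ∞ :=
    ae_lt_top (Measurable.ennreal_tsum fun k => hKmeas (ρ k)) hsum'
  filter_upwards [h1] with ω hω
  rw [← lintegral_tsum (f := fun k t => e (ρ k) ω t) (fun k =>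
    ((hjoint (ρ k)).comp measurable_prodMk_left).aemeasurable)] at hω
  have h2 : ∀ᵐ t ∂S.μ ω, (∑' k, e (ρ k) ω t) < ∞ :=
    ae_lt_top (Measurable.ennreal_tsum fun k =>
      (hjoint (ρ k)).comp measurable_prodMk_left) hω.ne
  filter_upwards [h2] with t ht
  have h3 : Tendsto (fun k => e (ρ k) ω t) atTop (𝓝 0) :=
    ENNReal.tendsto_atTop_zero_of_tsum_ne_top ht.ne
  have hemb := (hcont.isClosedEmbedding hinj).toIsEmbedding
  rw [hemb.tendsto_nhds_iff]
  have h4 : Tendsto (fun k => |h (Xn (ρ k) ω t) - h (X ω t)|) atTop (𝓝 0) := by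
    have h5 := (ENNReal.tendsto_toReal (ne_of_beq_false rfl : (0:ℝ≥0∞) ≠ ⊤)).comp h3
    simpa [he, Function.comp_def, ENNReal.toReal_ofReal (abs_nonneg _)] using h5
  refine tendsto_iff_dist_tendsto_zero.2 ?_
  simpa [Real.dist_eq] using h4

set_option maxHeartbeats 2000000 in
/-- Lemma 11: the pairing `(C,D) ↦ 𝔼⟨C,D⟩` is separately
lower-semicontinuous with respect to convergence in the metric `dist`:
`dist(Cⁿ,C) → 0` implies `liminf_n 𝔼⟨Cⁿ,D⟩ ≥ 𝔼⟨C,D⟩` for every `D ∈ 𝓓`, and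
`dist(Dⁿ,D) → 0` implies `liminf_n 𝔼⟨C,Dⁿ⟩ ≥ 𝔼⟨C,D⟩` for every `C ∈ 𝓒`. -/
theorem statement14 (S : Setup Ω) (h : ℝ≥0∞ → ℝ)
    (hcont : Continuous h) (hinj : Function.Injective h)
    (hrange : ∀ a : ℝ≥0∞, h a ∈ Set.Icc (0 : ℝ) 1) :
    (∀ (Cn : ℕ → Ω → ℝ≥0 → ℝ≥0∞) (C : Ω → ℝ≥0 → ℝ≥0∞),
      (∀ n, IsControl S (Cn n)) → IsControl S C →
      Filter.Tendsto (fun n => distE S h (Cn n) C) Filter.atTop (nhds 0) →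
      ∀ D : Ω → ℝ≥0 → ℝ≥0∞, IsDual S D →
        pairing S C D ≤ Filter.liminf (fun n => pairing S (Cn n) D) Filter.atTop) ∧
    (∀ (Dn : ℕ → Ω → ℝ≥0 → ℝ≥0∞) (D : Ω → ℝ≥0 → ℝ≥0∞),
      (∀ n, IsDual S (Dn n)) → IsDual S D →
      Filter.Tendsto (fun n => distE S h (Dn n) D) Filter.atTop (nhds 0) →
      ∀ C : Ω → ℝ≥0 → ℝ≥0∞, IsControl S C →
        pairing S C D ≤ Filter.liminf (fun n => pairing S C (Dn n)) Filter.atTop) := by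
  constructor
  · -- lower semicontinuity in C
    intro Cn C hCn hC hdist D hD
    obtain ⟨hCm, hC0, hClc, hCad⟩ := hC
    have hCslice : ∀ t : ℝ≥0, Measurable fun ω => C ω t := fun t =>
      (hCad t).mono (S.F.le t) le_rfl
    have hCnslice : ∀ n (t : ℝ≥0), Measurable fun ω => Cn n ω t := fun n t =>
      ((hCn n).2.2.2 t).mono (S.F.le t) le_rfl
    have hCjoint : Measurable fun p : Ω × ℝ≥0 => C p.1 p.2 :=
      control_uncurry_meas hCm hC0 hClc hCslice
    have hCnjoint : ∀ n, Measurable fun p : Ω × ℝ≥0 => Cn n p.1 p.2 := fun n =>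
      control_uncurry_meas (hCn n).1 (hCn n).2.1 (hCn n).2.2.1 (hCnslice n)
    have hDslice : ∀ t : ℝ≥0, Measurable fun ω => D ω t := fun t =>
      hD.2.2.comp (measurable_id.prodMk measurable_const)
    by_contra hcon
    push_neg at hcon
    obtain ⟨b, hb1, hb2⟩ := exists_between hcon
    have hfreq : ∃ᶠ n in atTop, pairing S (Cn n) D < b :=
      frequently_lt_of_liminf_lt (by isBoundedDefault) hb1
    obtain ⟨φ, hφmono, hφ⟩ := Filter.extraction_of_frequently_atTop hfreq
    have hd2 : Tendsto (fun n => distE S h (Cn (φ n)) C) atTop (𝓝 0) :=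
      hdist.comp hφmono.tendsto_atTop
    obtain ⟨ρ, hρmono, hae⟩ := exists_subseq_ae_tendsto S h hcont hinj
      (fun n => hCnjoint (φ n)) hCjoint hd2
    have hGmeas : ∀ k, Measurable fun p : Ω × ℝ =>
        ⨆ (t : ℝ≥0) (_ : ENNReal.ofReal p.2 < D p.1 t), Cn (φ (ρ k)) p.1 t := fun k =>
      G_meas (hCn _).1 (hCn _).2.1 (hCn _).2.2.1 (hCnslice _) hD.1 hDslice
    have key : pairing S C D ≤ liminf (fun k => pairing S (Cn (φ (ρ k))) D) atTop := by
      unfold pairing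
      have hHmeas : ∀ k, Measurable fun ω => ∫⁻ y in Ioi (0:ℝ),
          ⨆ (t : ℝ≥0) (_ : ENNReal.ofReal y < D ω t), Cn (φ (ρ k)) ω t := fun k =>
        Measurable.lintegral_prod_right' (hGmeas k)
      refine le_trans (lintegral_mono_ae ?_) (lintegral_liminf_le hHmeas)
      filter_upwards [hae] with ω hω
      set N := {t : ℝ≥0 | Tendsto (fun k => Cn (φ (ρ k)) ω t) atTop (𝓝 (C ω t))} with hN
      have hNnull : S.μ ω Nᶜ = 0 := by
        have := ae_iff.1 hω
        simpa [hN, Set.compl_setOf] using this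
      have hNd : ∀ a b : ℝ≥0, a < b → (N ∩ Ioo a b).Nonempty := fun a b hab =>
        conull_dense (S.A_zero ω) (S.A_strictMono ω) (S.μ_Iic ω) hNnull hab
      have hstep : ∫⁻ y in Ioi (0:ℝ), liminf (fun k =>
            ⨆ (t : ℝ≥0) (_ : ENNReal.ofReal y < D ω t), Cn (φ (ρ k)) ω t) atTop
          ≤ liminf (fun k => ∫⁻ y in Ioi (0:ℝ),
            ⨆ (t : ℝ≥0) (_ : ENNReal.ofReal y < D ω t), Cn (φ (ρ k)) ω t) atTop :=
        lintegral_liminf_le fun k => (hGmeas k).comp measurable_prodMk_left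
      refine le_trans (lintegral_mono fun y => ?_) hstep
      refine master (hCm ω) (hC0 ω) (hClc ω) ?_
      intro t ht r hr
      obtain ⟨u, huN, hu1, hu2⟩ := hNd r t hr
      have hPu : ENNReal.ofReal y < D ω u := lt_of_lt_of_le ht (hD.1 ω (le_of_lt hu2))
      refine ⟨u, hPu, le_of_lt hu1, ?_⟩
      have h1 : C ω u = liminf (fun k => Cn (φ (ρ k)) ω u) atTop :=
        (Filter.Tendsto.liminf_eq huN).symm
      rw [h1]
      refine liminf_le_liminf (Eventually.of_forall fun k => ?_)
      exact le_iSup₂ (f := fun (t : ℝ≥0) (_ : ENNReal.ofReal y < D ω t) =>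
        Cn (φ (ρ k)) ω t) u hPu
    have hle : liminf (fun k => pairing S (Cn (φ (ρ k))) D) atTop ≤ b := by
      refine le_trans (liminf_le_liminf (Eventually.of_forall fun k =>
        le_of_lt (hφ (ρ k)))) ?_
      simp [liminf_const]
    exact absurd (key.trans hle) (not_le.2 hb2)
  · -- lower semicontinuity in D
    intro Dn D hDn hD hdist C hC
    obtain ⟨hCm, hC0, hClc, hCad⟩ := hC
    have hCslice : ∀ t : ℝ≥0, Measurable fun ω => C ω t := fun t =>
      (hCad t).mono (S.F.le t) le_rfl
    have hDjoint : Measurable fun p : Ω × ℝ≥0 => D p.1 p.2 := hD.2.2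
    have hDnjoint : ∀ n, Measurable fun p : Ω × ℝ≥0 => Dn n p.1 p.2 := fun n => (hDn n).2.2
    have hDnslice : ∀ n (t : ℝ≥0), Measurable fun ω => Dn n ω t := fun n t =>
      (hDnjoint n).comp (measurable_id.prodMk measurable_const)
    by_contra hcon
    push_neg at hcon
    obtain ⟨b, hb1, hb2⟩ := exists_between hcon
    have hfreq : ∃ᶠ n in atTop, pairing S C (Dn n) < b :=
      frequently_lt_of_liminf_lt (by isBoundedDefault) hb1
    obtain ⟨φ, hφmono, hφ⟩ := Filter.extraction_of_frequently_atTop hfreq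
    have hd2 : Tendsto (fun n => distE S h (Dn (φ n)) D) atTop (𝓝 0) :=
      hdist.comp hφmono.tendsto_atTop
    obtain ⟨ρ, hρmono, hae⟩ := exists_subseq_ae_tendsto S h hcont hinj
      (fun n => hDnjoint (φ n)) hDjoint hd2
    have hGmeas : ∀ k, Measurable fun p : Ω × ℝ =>
        ⨆ (t : ℝ≥0) (_ : ENNReal.ofReal p.2 < Dn (φ (ρ k)) p.1 t), C p.1 t := fun k =>
      G_meas hCm hC0 hClc hCslice (hDn _).1 (hDnslice _)
    have key : pairing S C D ≤ liminf (fun k => pairing S C (Dn (φ (ρ k)))) atTop := by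
      unfold pairing
      have hHmeas : ∀ k, Measurable fun ω => ∫⁻ y in Ioi (0:ℝ),
          ⨆ (t : ℝ≥0) (_ : ENNReal.ofReal y < Dn (φ (ρ k)) ω t), C ω t := fun k =>
        Measurable.lintegral_prod_right' (hGmeas k)
      refine le_trans (lintegral_mono_ae ?_) (lintegral_liminf_le hHmeas)
      filter_upwards [hae] with ω hω
      set N := {t : ℝ≥0 | Tendsto (fun k => Dn (φ (ρ k)) ω t) atTop (𝓝 (D ω t))} with hN
      have hNnull : S.μ ω Nᶜ = 0 := by
        have := ae_iff.1 hω
        simpa [hN, Set.compl_setOf] using this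
      have hNd : ∀ a b : ℝ≥0, a < b → (N ∩ Ioo a b).Nonempty := fun a b hab =>
        conull_dense (S.A_zero ω) (S.A_strictMono ω) (S.μ_Iic ω) hNnull hab
      have hstep : ∫⁻ y in Ioi (0:ℝ), liminf (fun k =>
            ⨆ (t : ℝ≥0) (_ : ENNReal.ofReal y < Dn (φ (ρ k)) ω t), C ω t) atTop
          ≤ liminf (fun k => ∫⁻ y in Ioi (0:ℝ),
            ⨆ (t : ℝ≥0) (_ : ENNReal.ofReal y < Dn (φ (ρ k)) ω t), C ω t) atTop :=
        lintegral_liminf_le fun k => (hGmeas k).comp measurable_prodMk_left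
      refine le_trans (lintegral_mono fun y => ?_) hstep
      refine master (hCm ω) (hC0 ω) (hClc ω) ?_
      intro t ht r hr
      obtain ⟨u, huN, hu1, hu2⟩ := hNd r t hr
      have hPu : ENNReal.ofReal y < D ω u := lt_of_lt_of_le ht (hD.1 ω (le_of_lt hu2))
      refine ⟨u, hPu, le_of_lt hu1, ?_⟩
      have hev : ∀ᶠ k in atTop, ENNReal.ofReal y < Dn (φ (ρ k)) ω u :=
        Filter.Tendsto.eventually_const_lt hPu huN
      refine le_liminf_of_le (by isBoundedDefault) ?_
      exact hev.mono fun k hk => le_iSup₂ (f := fun (t : ℝ≥0)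
        (_ : ENNReal.ofReal y < Dn (φ (ρ k)) ω t) => C ω t) u hk
    have hle : liminf (fun k => pairing S C (Dn (φ (ρ k)))) atTop ≤ b := by
      refine le_trans (liminf_le_liminf (Eventually.of_forall fun k =>
        le_of_lt (hφ (ρ k)))) ?_
      simp [liminf_const]
    exact absurd (key.trans hle) (not_le.2 hb2)
end
end

section
/- A concave, upper-semicontinuous, real-valued function on a nonempty convex, convexly compact subset of a topological vector space attains its supremum on that set. -/
open Set Filter
open scoped Topology

/-- Convex compactness (Žitković) of a subset `K` of a topological vector space:
every family of convex subsets of `K` which are closed in `K` (in the subspace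
topology) and have the finite intersection property has nonempty total
intersection. -/
def ConvexlyCompactIn {E : Type*} [AddCommMonoid E] [Module ℝ E]
    [TopologicalSpace E] (K : Set E) : Prop :=
  ∀ {ι : Type*} (s : ι → Set E),
    (∀ i, s i ⊆ K) → (∀ i, Convex ℝ (s i)) →
    (∀ i, ∃ F : Set E, IsClosed F ∧ s i = K ∩ F) →
    (∀ J : Finset ι, (K ∩ ⋂ i ∈ J, s i).Nonempty) → (K ∩ ⋂ i, s i).Nonempty

/-- a concave, upper-semicontinuous, real-valued function on a
nonempty convex, convexly compact subset of a topological vector space attains its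
supremum on that set. -/
theorem statement17 {E : Type*}
    [AddCommGroup E] [Module ℝ E] [TopologicalSpace E]
    [IsTopologicalAddGroup E] [ContinuousSMul ℝ E]
    (K : Set E) (hne : K.Nonempty) (hconv : Convex ℝ K)
    (hcc : ConvexlyCompactIn K)
    (f : E → ℝ) (hconc : ConcaveOn ℝ K f)
    (husc : UpperSemicontinuousOn f K) :
    ∃ x ∈ K, ∀ y ∈ K, f y ≤ f x := by

  -- index type: reals which are ≤ f of some point of K
  set ι := {c : ℝ // ∃ x ∈ K, c ≤ f x} with hι
  set s : ι → Set E := fun c => {x ∈ K | c.1 ≤ f x} with hs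
  have hsub : ∀ i, s i ⊆ K := fun i x hx => hx.1
  have hcv : ∀ i, Convex ℝ (s i) := fun i => hconc.convex_ge i.1
  have hcl : ∀ i : ι, ∃ F : Set E, IsClosed F ∧ s i = K ∩ F := by
    intro i
    -- the set U = {x ∈ K | f x < c} is open in K
    have hU : ∀ x ∈ {x ∈ K | f x < i.1}, ∃ V : Set E, IsOpen V ∧ x ∈ V ∧
        K ∩ V ⊆ {x ∈ K | f x < i.1} := by
      intro x hx
      have := husc x hx.1 i.1 hx.2
      rcases mem_nhdsWithin.1 this with ⟨V, hVopen, hxV, hVsub⟩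
      exact ⟨V, hVopen, hxV, fun z hz => ⟨hz.1, hVsub ⟨hz.2, hz.1⟩⟩⟩
    choose! V hVopen hxV hVsub using hU
    refine ⟨(⋃ x ∈ {x ∈ K | f x < i.1}, V x)ᶜ, (isOpen_biUnion hVopen).isClosed_compl, ?_⟩
    ext z
    simp only [hs, mem_setOf_eq, mem_inter_iff, mem_compl_iff, mem_iUnion, not_exists]
    constructor
    · rintro ⟨hzK, hzf⟩
      refine ⟨hzK, fun x hx hzV => ?_⟩
      have := hVsub x hx ⟨hzK, hzV⟩
      exact absurd hzf (not_le.2 this.2)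
    · rintro ⟨hzK, hz⟩
      refine ⟨hzK, ?_⟩
      by_contra h
      exact hz z ⟨hzK, not_le.1 h⟩ (hxV z ⟨hzK, not_le.1 h⟩)
  have hfip : ∀ J : Finset ι, (K ∩ ⋂ i ∈ J, s i).Nonempty := by
    intro J
    rcases J.eq_empty_or_nonempty with rfl | hJ
    · simpa using hne
    · obtain ⟨m, hm, hmax⟩ := J.exists_max_image (fun i => i.1) hJ
      obtain ⟨x, hxK, hxf⟩ := m.2
      refine ⟨x, hxK, ?_⟩
      simp only [mem_iInter₂]
      intro i hi
      exact ⟨hxK, le_trans (hmax i hi) hxf⟩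
  obtain ⟨x, hxK, hx⟩ := hcc (fun c : ULift ι => s c.down)
    (fun i => hsub i.down) (fun i => hcv i.down) (fun i => hcl i.down)
    (fun J => by
      obtain ⟨x, hxK, hx⟩ := hfip (J.image ULift.down)
      refine ⟨x, hxK, ?_⟩
      simp only [mem_iInter₂] at hx ⊢
      intro i hi
      exact hx i.down (Finset.mem_image_of_mem _ hi))
  refine ⟨x, hxK, fun y hy => ?_⟩
  have : x ∈ s ⟨f y, y, hy, le_rfl⟩ := by
    simp only [mem_iInter] at hx; exact hx ⟨⟨f y, y, hy, le_rfl⟩⟩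
  exact this.2
end
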